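/- Let (V_i)_{i∈ℤ} be a family of finite-dimensional complex inner product spaces together with linear maps d_i : V_i → V_{i+1} satisfying d_{i+1} ∘ d_i = 0 for all i ∈ ℤ, and let Δ_i = d_{i-1} ∘ (d_{i-1})* + (d_i)* ∘ d_i, where * denotes the adjoint with respect to the inner products. Then for every i ∈ ℤ, V_i is the internal orthogonal direct sum of range(d_{i-1}), range((d_i)*) and ker(Δ_i). -/
import Mathlib


open scoped ComplexInnerProductSpace

/-- The `i`-th Laplace operator of a cochain complex of finite-dimensional complex
inner product spaces, acting on `V (i+1)`:
`Δ_{i+1} = d_i ∘ (d_i)* + (d_{i+1})* ∘ d_{i+1}`. -/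
noncomputable def LapFin (V : ℤ → Type*) [∀ i, NormedAddCommGroup (V i)]
    [∀ i, InnerProductSpace ℂ (V i)] [∀ i, FiniteDimensional ℂ (V i)]
    (d : ∀ i, V i →ₗ[ℂ] V (i + 1)) (i : ℤ) : V (i + 1) →ₗ[ℂ] V (i + 1) :=
  (d i).comp (LinearMap.adjoint (d i)) +
    (LinearMap.adjoint (d (i + 1))).comp (d (i + 1))

/-- For a cochain complex of finite-dimensional complex inner product spaces, each
`V i` is the internal orthogonal direct sum of `range d_{i-1}`, `range (d_i)*` and
`ker Δ_i`. -/
theorem stmt4 (V : ℤ → Type*) [∀ i, NormedAddCommGroup (V i)]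
    [∀ i, InnerProductSpace ℂ (V i)] [∀ i, FiniteDimensional ℂ (V i)]
    (d : ∀ i, V i →ₗ[ℂ] V (i + 1))
    (hd : ∀ i, (d (i + 1)).comp (d i) = 0) :
    ∀ i : ℤ,
      (∀ x ∈ LinearMap.range (d i),
        ∀ y ∈ LinearMap.range (LinearMap.adjoint (d (i + 1))), ⟪x, y⟫ = 0) ∧
      (∀ x ∈ LinearMap.range (d i), ∀ z ∈ LinearMap.ker (LapFin V d i), ⟪x, z⟫ = 0) ∧
      (∀ y ∈ LinearMap.range (LinearMap.adjoint (d (i + 1))),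
        ∀ z ∈ LinearMap.ker (LapFin V d i), ⟪y, z⟫ = 0) ∧
      (∀ u : V (i + 1),
        ∃ x ∈ LinearMap.range (d i),
          ∃ y ∈ LinearMap.range (LinearMap.adjoint (d (i + 1))),
            ∃ z ∈ LinearMap.ker (LapFin V d i), u = x + y + z) := by
  intro i
  -- ker Δ characterization
  have hker : ∀ z : V (i + 1), z ∈ LinearMap.ker (LapFin V d i) →
      LinearMap.adjoint (d i) z = 0 ∧ d (i + 1) z = 0 := by
    intro z hz
    have hz' : (d i) (LinearMap.adjoint (d i) z) +
        (LinearMap.adjoint (d (i + 1))) ((d (i + 1)) z) = 0 := hz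
    have h0 : ⟪(d i) (LinearMap.adjoint (d i) z) +
        (LinearMap.adjoint (d (i + 1))) ((d (i + 1)) z), z⟫ = 0 := by
      rw [hz']; simp
    rw [inner_add_left, LinearMap.adjoint_inner_left,
      ← LinearMap.adjoint_inner_right (d i), inner_self_eq_norm_sq_to_K,
      inner_self_eq_norm_sq_to_K] at h0
    have h2 : (‖LinearMap.adjoint (d i) z‖ : ℝ) ^ 2 + (‖(d (i + 1)) z‖ : ℝ) ^ 2 = 0 := by
      norm_cast at h0
      exact RCLike.ofReal_eq_zero.mp h0
    have ha : ‖LinearMap.adjoint (d i) z‖ = 0 := by nlinarith [sq_nonneg ‖LinearMap.adjoint (d i) z‖, sq_nonneg ‖(d (i+1)) z‖, norm_nonneg (LinearMap.adjoint (d i) z), norm_nonneg ((d (i+1)) z)]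
    have hb : ‖(d (i + 1)) z‖ = 0 := by nlinarith [sq_nonneg ‖LinearMap.adjoint (d i) z‖, norm_nonneg (LinearMap.adjoint (d i) z), norm_nonneg ((d (i+1)) z)]
    exact ⟨norm_eq_zero.mp ha, norm_eq_zero.mp hb⟩
  refine ⟨?_, ?_, ?_, ?_⟩
  · rintro x ⟨a, rfl⟩ y ⟨b, rfl⟩
    rw [LinearMap.adjoint_inner_right]
    have : (d (i + 1)) ((d i) a) = 0 := by
      have := congrFun (congrArg DFunLike.coe (hd i)) a
      simpa using this
    rw [this, inner_zero_left]
  · rintro x ⟨a, rfl⟩ z hz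
    rw [← LinearMap.adjoint_inner_right, (hker z hz).1, inner_zero_right]
  · rintro y ⟨b, rfl⟩ z hz
    rw [LinearMap.adjoint_inner_left, (hker z hz).2, inner_zero_right]
  · intro u
    set W : Submodule ℂ (V (i+1)) :=
      LinearMap.range (d i) ⊔ LinearMap.range (LinearMap.adjoint (d (i + 1))) with hW
    obtain ⟨w, hw, z, hz, rfl⟩ := W.exists_add_mem_mem_orthogonal u
    obtain ⟨x, hx, y, hy, rfl⟩ := Submodule.mem_sup.mp hw
    refine ⟨x, hx, y, hy, z, ?_, rfl⟩
    -- z ∈ Wᗮ → z ∈ ker Δ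
    have hzx : ∀ a : V i, ⟪(d i) a, z⟫ = 0 := fun a =>
      (Submodule.mem_orthogonal W z).mp hz _ (Submodule.mem_sup_left ⟨a, rfl⟩)
    have hzy : ∀ b : V (i + 1 + 1), ⟪(LinearMap.adjoint (d (i + 1))) b, z⟫ = 0 := fun b =>
      (Submodule.mem_orthogonal W z).mp hz _ (Submodule.mem_sup_right ⟨b, rfl⟩)
    have h1 : LinearMap.adjoint (d i) z = 0 := by
      apply ext_inner_left ℂ
      intro a
      rw [LinearMap.adjoint_inner_right, hzx a, inner_zero_right]
    have h2 : d (i + 1) z = 0 := by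
      apply ext_inner_left ℂ
      intro b
      rw [← LinearMap.adjoint_inner_left, hzy b, inner_zero_right]
    show (d i) (LinearMap.adjoint (d i) z) +
        (LinearMap.adjoint (d (i + 1))) ((d (i + 1)) z) = 0
    rw [h1, h2]; simp
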